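/- Let X be a compact convex subset of ℝ^d with nonempty interior, fix β > 0, and let (x_k) be the boundary-phobic greedy sequence: X_0 = ∅ and x_{k+1} ∈ argmax_{x∈X} D_β(x, X_k), where D_β(x, Z) = min{d(x,Z), β·d(x,∂X)} (with the convention d(x,∅) = +∞, so x_1 maximizes d(x,∂X)). Then for all n ≥ 1, P_β(X_{n+1}) = (1/2) · S_β(X_n), where S_β(Z) = sup_{x∈X} D_β(x,Z) and P_β(Z) = min over distinct pairs z_i ≠ z_j in Z of (1/2) min{‖z_i − z_j‖, β·d(z_i,∂X)}. -/

import Mathlib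

open Metric
open scoped Classical

/-- The boundary-phobic compromise distance
`D_β(x,Z) = min{d(x,Z), β d(x,∂X)}`, with the convention `d(x,∅) = +∞`
(so that `D_β(x,∅) = β d(x,∂X)`). -/
noncomputable def Dbeta {d : ℕ} (X : Set (EuclideanSpace ℝ (Fin d))) (β : ℝ)
    (Z : Set (EuclideanSpace ℝ (Fin d))) (y : EuclideanSpace ℝ (Fin d)) : ℝ :=
  if Z.Nonempty then min (infDist y Z) (β * infDist y (frontier X))
  else β * infDist y (frontier X)

/-- The `β`-spacing `S_β(Z) = sup_{x∈X} D_β(x,Z)`. -/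
noncomputable def Sbeta {d : ℕ} (X : Set (EuclideanSpace ℝ (Fin d))) (β : ℝ)
    (Z : Set (EuclideanSpace ℝ (Fin d))) : ℝ :=
  sSup ((Dbeta X β Z) '' X)

/-- The `β`-packing `P_β(Z) = min_{z ≠ z' ∈ Z} (1/2) min{‖z − z'‖, β d(z,∂X)}`. -/
noncomputable def Pbeta {d : ℕ} (X : Set (EuclideanSpace ℝ (Fin d))) (β : ℝ)
    (Z : Set (EuclideanSpace ℝ (Fin d))) : ℝ :=
  sInf {v : ℝ | ∃ p ∈ Z, ∃ q ∈ Z, p ≠ q ∧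
    v = (1 / 2) * min (dist p q) (β * infDist p (frontier X))}

lemma Dbeta_anti {d : ℕ} (X : Set (EuclideanSpace ℝ (Fin d))) {β : ℝ} (hβ : 0 ≤ β)
    {Z Z' : Set (EuclideanSpace ℝ (Fin d))} (h : Z ⊆ Z') (y : EuclideanSpace ℝ (Fin d)) :
    Dbeta X β Z' y ≤ Dbeta X β Z y := by
  unfold Dbeta
  by_cases hZ : Z.Nonempty
  · simp only [hZ, hZ.mono h, if_true]
    exact min_le_min (infDist_le_infDist_of_subset h hZ) le_rfl
  · simp only [hZ, if_false]
    by_cases hZ' : Z'.Nonempty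
    · simp only [hZ', if_true]; exact min_le_right _ _
    · simp [hZ']

lemma Dbeta_nonneg {d : ℕ} (X : Set (EuclideanSpace ℝ (Fin d))) {β : ℝ} (hβ : 0 ≤ β)
    (Z : Set (EuclideanSpace ℝ (Fin d))) (y : EuclideanSpace ℝ (Fin d)) :
    0 ≤ Dbeta X β Z y := by
  unfold Dbeta
  have h1 : 0 ≤ β * infDist y (frontier X) := mul_nonneg hβ infDist_nonneg
  split
  · exact le_min infDist_nonneg h1
  · exact h1

lemma Dbeta_le_beta {d : ℕ} (X : Set (EuclideanSpace ℝ (Fin d))) (β : ℝ)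
    (Z : Set (EuclideanSpace ℝ (Fin d))) (y : EuclideanSpace ℝ (Fin d)) :
    Dbeta X β Z y ≤ β * infDist y (frontier X) := by
  unfold Dbeta
  split
  · exact min_le_right _ _
  · exact le_rfl

/-- **Basic identity of boundary-phobic coffee-house designs.**  Let `X ⊂ ℝ^d` be compact
convex with nonempty interior, `β > 0`, and let `x k` maximize `D_β(·, X_k)` over `X`,
where `X_k = {x 0, …, x (k−1)}` (the first point maximizes `β d(·,∂X)`).
Then `P_β(X_{n+1}) = (1/2) S_β(X_n)` for all `n ≥ 1`. -/
theorem boundaryPhobic_packing_eq_half_spacing {d : ℕ}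
    (X : Set (EuclideanSpace ℝ (Fin d))) (hX : IsCompact X)
    (hconv : Convex ℝ X) (hint : (interior X).Nonempty)
    (β : ℝ) (hβ : 0 < β)
    (x : ℕ → EuclideanSpace ℝ (Fin d))
    (hgreedy : ∀ k : ℕ, x k ∈ X ∧ ∀ y ∈ X,
      Dbeta X β (x '' Set.Iio k) y ≤ Dbeta X β (x '' Set.Iio k) (x k)) :
    ∀ n : ℕ, 1 ≤ n →
      Pbeta X β (x '' Set.Iio (n + 1)) = (1 / 2) * Sbeta X β (x '' Set.Iio n) := by
  intro n hn
  have hxmem : ∀ k, x k ∈ X := fun k => (hgreedy k).1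
  set S := Dbeta X β (x '' Set.Iio n) (x n) with hSdef
  have hSb : Sbeta X β (x '' Set.Iio n) = S := by
    apply IsGreatest.csSup_eq
    exact ⟨⟨x n, hxmem n, rfl⟩, by rintro v ⟨y, hy, rfl⟩; exact (hgreedy n).2 y hy⟩
  have hXnne : (x '' Set.Iio n).Nonempty := ⟨x 0, 0, hn, rfl⟩
  have hSmin : S = min (infDist (x n) (x '' Set.Iio n)) (β * infDist (x n) (frontier X)) := by
    rw [hSdef, Dbeta, if_pos hXnne]
  have hmono : ∀ k m : ℕ, k ≤ m →
      Dbeta X β (x '' Set.Iio m) (x m) ≤ Dbeta X β (x '' Set.Iio k) (x k) :=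
    fun k m hkm =>
      le_trans (Dbeta_anti X hβ.le (Set.image_mono (Set.Iio_subset_Iio hkm)) _)
        ((hgreedy k).2 (x m) (hxmem m))
  -- distance lower bound
  have hdist : ∀ l m : ℕ, l < m → m ≤ n → S ≤ dist (x m) (x l) := by
    intro l m hlm hmn
    have hne : (x '' Set.Iio m).Nonempty := ⟨x l, l, hlm, rfl⟩
    calc S ≤ Dbeta X β (x '' Set.Iio m) (x m) := hmono m n hmn
      _ ≤ infDist (x m) (x '' Set.Iio m) := by rw [Dbeta, if_pos hne]; exact min_le_left _ _
      _ ≤ dist (x m) (x l) := infDist_le_dist_of_mem ⟨l, hlm, rfl⟩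
  have key : ∀ i j : ℕ, i ≤ n → j ≤ n → x i ≠ x j →
      S ≤ min (dist (x i) (x j)) (β * infDist (x i) (frontier X)) := by
    intro i j hi hj hne
    have hij : i ≠ j := fun h => hne (by rw [h])
    refine le_min ?_ ?_
    · rcases hij.lt_or_gt with h | h
      · rw [dist_comm]; exact hdist i j h hj
      · exact hdist j i h hi
    · exact le_trans (hmono i n hi) (Dbeta_le_beta X β _ _)
  rw [hSb]
  have hbdd : BddBelow {v : ℝ | ∃ p ∈ x '' Set.Iio (n+1), ∃ q ∈ x '' Set.Iio (n+1), p ≠ q ∧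
      v = (1 / 2) * min (dist p q) (β * infDist p (frontier X))} := by
    refine ⟨0, ?_⟩
    rintro v ⟨p, _, q, _, _, rfl⟩
    have : (0:ℝ) ≤ min (dist p q) (β * infDist p (frontier X)) :=
      le_min dist_nonneg (mul_nonneg hβ.le infDist_nonneg)
    linarith
  rcases subsingleton_or_nontrivial (EuclideanSpace ℝ (Fin d)) with hsub | hnt
  · -- degenerate: everything is 0
    have hS0 : S = 0 := by
      have h1 : S ≤ infDist (x n) (x '' Set.Iio n) := hSmin ▸ min_le_left _ _
      have h2 : infDist (x n) (x '' Set.Iio n) = 0 :=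
        infDist_zero_of_mem (by exact ⟨0, hn, Subsingleton.elim _ _⟩)
      have h3 : 0 ≤ S := Dbeta_nonneg X hβ.le _ _
      linarith
    have hempty : {v : ℝ | ∃ p ∈ x '' Set.Iio (n+1), ∃ q ∈ x '' Set.Iio (n+1), p ≠ q ∧
        v = (1 / 2) * min (dist p q) (β * infDist p (frontier X))} = ∅ := by
      ext v
      simp only [Set.mem_setOf_eq, Set.mem_empty_iff_false, iff_false]
      rintro ⟨p, _, q, _, hpq, _⟩
      exact hpq (Subsingleton.elim _ _)
    rw [Pbeta, hempty, Real.sInf_empty, hS0, mul_zero]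
  · -- nondegenerate: S > 0
    have hSpos : 0 < S := by
      have hfin : (x '' Set.Iio n).Finite := (Set.finite_Iio n).image x
      have hd : Dense ((x '' Set.Iio n)ᶜ) := Set.Countable.dense_compl ℝ hfin.countable
      obtain ⟨y, hyc, hyi⟩ := hd.exists_mem_open isOpen_interior hint
      have hyX : y ∈ X := interior_subset hyi
      have h1 : 0 < infDist y (x '' Set.Iio n) :=
        ((hfin.isClosed).notMem_iff_infDist_pos hXnne).mp hyc
      have hfr : (frontier X).Nonempty := by
        by_contra hfe
        rw [Set.not_nonempty_iff_eq_empty] at hfe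
        have : X = ∅ ∨ X = Set.univ := isClopen_iff.mp (isClopen_iff_frontier_eq_empty.mpr hfe)
        rcases this with h | h
        · exact absurd (h ▸ hyX) (Set.notMem_empty y)
        · exact hX.ne_univ h
      have h2 : 0 < infDist y (frontier X) := by
        refine (isClosed_frontier.notMem_iff_infDist_pos hfr).mp ?_
        rw [(hX.isClosed).frontier_eq]
        exact fun h => h.2 hyi
      have hD : 0 < Dbeta X β (x '' Set.Iio n) y := by
        rw [Dbeta, if_pos hXnne]
        exact lt_min h1 (mul_pos hβ h2)
      exact lt_of_lt_of_le hD ((hgreedy n).2 y hyX)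
    -- nearest point to x n in X_n
    obtain ⟨q, hqmem, hq⟩ := ((Set.finite_Iio n).image x).isCompact.exists_infDist_eq_dist hXnne (x n)
    have hSle : S ≤ infDist (x n) (x '' Set.Iio n) := hSmin ▸ min_le_left _ _
    have hxq : x n ≠ q := by
      intro h
      have h0 : infDist (x n) (x '' Set.Iio n) = 0 := by rw [hq, h, dist_self]
      linarith
    have hv0 : (1/2) * S ∈ {v : ℝ | ∃ p ∈ x '' Set.Iio (n+1), ∃ q ∈ x '' Set.Iio (n+1), p ≠ q ∧
        v = (1 / 2) * min (dist p q) (β * infDist p (frontier X))} := by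
      refine ⟨x n, ⟨n, Nat.lt_succ_self n, rfl⟩, q, ?_, hxq, ?_⟩
      · exact Set.image_mono (Set.Iio_subset_Iio (Nat.le_succ n)) hqmem
      · rw [← hq, ← hSmin]
    refine le_antisymm (csInf_le hbdd hv0) (le_csInf ⟨_, hv0⟩ ?_)
    rintro v ⟨p, ⟨i, hi, rfl⟩, r, ⟨j, hj, rfl⟩, hpq, rfl⟩
    have := key i j (Nat.lt_succ_iff.mp hi) (Nat.lt_succ_iff.mp hj) hpq
    linarith
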